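/- Pruning soundness for Hall sets: let K ⊆ {1,...,n} be a Hall set for alldifferent (i.e. |K| = |I_K| where I_K = [min ⋃_{i∈K}D_i, max ⋃_{i∈K}D_i]). Then in every solution of alldifferent, the values {d_i : i ∈ K} are exactly the elements of I_K, and hence d_j ∉ I_K for all j ∉ K. -/

import Mathlib

/-- The interval `I_K = [min ⋃_{i∈K} D i, max ⋃_{i∈K} D i]` of a nonempty set
of variables `K`. -/
noncomputable def IntervalOf {n : ℕ} (D : Fin n → Finset ℤ) (hne : ∀ i, (D i).Nonempty)
    (K : Finset (Fin n)) (hK : K.Nonempty) : Finset ℤ :=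
  have h : (K.biUnion D).Nonempty :=
    hK.elim fun i hi => (hne i).elim fun v hv =>
      ⟨v, Finset.mem_biUnion.mpr ⟨i, hi, hv⟩⟩
  Finset.Icc ((K.biUnion D).min' h) ((K.biUnion D).max' h)

/-- Pruning soundness for Hall sets: if `K` is a Hall set (`|K| = |I_K|`),
then in every solution of `alldifferent`, the values taken by the variables of
`K` are exactly the elements of `I_K`, and hence every variable outside `K`
takes a value outside `I_K`. -/
theorem hall_set_pruning {n : ℕ} (D : Fin n → Finset ℤ)
    (hne : ∀ i, (D i).Nonempty) (K : Finset (Fin n)) (hK : K.Nonempty)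
    (hHall : K.card = (IntervalOf D hne K hK).card)
    (d : Fin n → ℤ) (hd : ∀ i, d i ∈ D i) (hinj : Function.Injective d) :
    K.image d = IntervalOf D hne K hK ∧
    ∀ j : Fin n, j ∉ K → d j ∉ IntervalOf D hne K hK := by
  have hsub : K.image d ⊆ IntervalOf D hne K hK := by
    intro v hv
    obtain ⟨i, hi, rfl⟩ := Finset.mem_image.mp hv
    have hmem : d i ∈ K.biUnion D := Finset.mem_biUnion.mpr ⟨i, hi, hd i⟩
    simp only [IntervalOf, Finset.mem_Icc]
    exact ⟨Finset.min'_le _ _ hmem, Finset.le_max' _ _ hmem⟩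
  have hcard : (K.image d).card = (IntervalOf D hne K hK).card := by
    rw [Finset.card_image_of_injective _ hinj, hHall]
  have heq : K.image d = IntervalOf D hne K hK :=
    Finset.eq_of_subset_of_card_le hsub (le_of_eq hcard.symm)
  refine ⟨heq, fun j hj hmem => ?_⟩
  rw [← heq] at hmem
  obtain ⟨i, hi, hdi⟩ := Finset.mem_image.mp hmem
  exact hj (hinj hdi ▸ hi)
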